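/- For every bipartite density matrix σ on ℂ^{dA}⊗ℂ^{dB} there exist a dimension d_in equal to the rank of σ, an isometry V : ℂ^{d_in} → ℂ^{dA}⊗ℂ^{dB} (V†V = I), and a positive definite density matrix ρ on ℂ^{d_in}, such that V ρ V† = σ; consequently, the channel N defined by N(μ) = Tr_B(V μ V†) satisfies N(ρ) = Tr_B σ and χ_N(ρ) = H(Tr_B σ) − E_F(σ). -/

import Mathlib

open scoped Kronecker Matrix ComplexOrder

noncomputable section

/-- The von Neumann entropy `H(ρ) = -∑ᵢ λᵢ log λᵢ` of a Hermitian matrix,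
where the `λᵢ` are its eigenvalues (with the convention `0 log 0 = 0`,
which holds automatically since `Real.log 0 = 0`). -/
def vNEntropy {n : Type} [Fintype n] [DecidableEq n] (ρ : Matrix n n ℂ) : ℝ :=
  if h : ρ.IsHermitian then -∑ i, h.eigenvalues i * Real.log (h.eigenvalues i) else 0

/-- A density matrix: positive semidefinite with trace 1. -/
def IsDensityMatrix {n : Type} [Fintype n] [DecidableEq n] (ρ : Matrix n n ℂ) : Prop :=
  ρ.PosSemidef ∧ ρ.trace = 1

/-- The rank-one matrix `|v⟩⟨v|`. -/
def outer {n : Type} [Fintype n] (v : n → ℂ) : Matrix n n ℂ :=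
  Matrix.vecMulVec v (star v)

/-- A unit vector. -/
def IsUnitVec {n : Type} [Fintype n] (v : n → ℂ) : Prop :=
  ∑ a, ‖v a‖ ^ 2 = 1

/-- A quantum channel, given by a finite family of Kraus operators `A k`
satisfying the completeness relation `∑ k, (A k)ᴴ * A k = 1`. -/
structure QChannel (I O : Type) [Fintype I] [DecidableEq I] [Fintype O] [DecidableEq O] :
    Type 1 where
  ι : Type
  [instFintype : Fintype ι]
  A : ι → Matrix O I ℂ
  complete : ∑ k, (A k)ᴴ * A k = 1

attribute [instance] QChannel.instFintype

/-- The action `N(ρ) = ∑ₖ Aₖ ρ Aₖᴴ` of a channel on a matrix. -/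
def QChannel.app {I O : Type} [Fintype I] [DecidableEq I] [Fintype O] [DecidableEq O]
    (N : QChannel I O) (ρ : Matrix I I ℂ) : Matrix O O ℂ :=
  ∑ k, N.A k * ρ * (N.A k)ᴴ

theorem kronecker_conjT {l m n p : Type} (A : Matrix l m ℂ) (B : Matrix n p ℂ) :
    (A ⊗ₖ B)ᴴ = Aᴴ ⊗ₖ Bᴴ := by
  ext ⟨i, j⟩ ⟨k, s⟩
  simp [Matrix.conjTranspose_apply, mul_comm]

theorem sum_kronecker_sum {ι₁ ι₂ l m n p : Type} [Fintype ι₁] [Fintype ι₂]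
    (A : ι₁ → Matrix l m ℂ) (B : ι₂ → Matrix n p ℂ) :
    (∑ i, A i) ⊗ₖ (∑ j, B j) = ∑ k : ι₁ × ι₂, A k.1 ⊗ₖ B k.2 := by
  ext ⟨x, y⟩ ⟨x', y'⟩
  simp only [Matrix.sum_apply, Matrix.kroneckerMap_apply, Finset.sum_mul_sum]
  exact (Fintype.sum_prod_type (fun k : ι₁ × ι₂ => A k.1 x x' * B k.2 y y')).symm

/-- The tensor-product channel `N₁ ⊗ N₂`: its Kraus operators are the Kronecker
products of the Kraus operators of the two factors. -/
def QChannel.prod {I₁ O₁ I₂ O₂ : Type}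
    [Fintype I₁] [DecidableEq I₁] [Fintype O₁] [DecidableEq O₁]
    [Fintype I₂] [DecidableEq I₂] [Fintype O₂] [DecidableEq O₂]
    (N₁ : QChannel I₁ O₁) (N₂ : QChannel I₂ O₂) : QChannel (I₁ × I₂) (O₁ × O₂) where
  ι := N₁.ι × N₂.ι
  A := fun k => N₁.A k.1 ⊗ₖ N₂.A k.2
  complete := by
    have h1 : ∀ k : N₁.ι × N₂.ι, (N₁.A k.1 ⊗ₖ N₂.A k.2)ᴴ * (N₁.A k.1 ⊗ₖ N₂.A k.2)
        = ((N₁.A k.1)ᴴ * N₁.A k.1) ⊗ₖ ((N₂.A k.2)ᴴ * N₂.A k.2) := fun k => by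
      rw [kronecker_conjT, Matrix.mul_kronecker_mul]
    rw [Finset.sum_congr rfl fun k _ => h1 k,
      ← sum_kronecker_sum (fun k₁ => (N₁.A k₁)ᴴ * N₁.A k₁) (fun k₂ => (N₂.A k₂)ᴴ * N₂.A k₂),
      N₁.complete, N₂.complete, Matrix.one_kronecker_one]

/-- The minimum output entropy of a channel: the minimum of `H(N(|v⟩⟨v|))`
over unit vectors `v` in the input space. -/
def minOutEntropy {I O : Type} [Fintype I] [DecidableEq I] [Fintype O] [DecidableEq O]
    (N : QChannel I O) : ℝ :=
  sInf { x | ∃ v : I → ℂ, IsUnitVec v ∧ x = vNEntropy (N.app (outer v)) }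

/-- The Holevo capacity `χ_N` of a channel. -/
def holevoCap {I O : Type} [Fintype I] [DecidableEq I] [Fintype O] [DecidableEq O]
    (N : QChannel I O) : ℝ :=
  sSup { x | ∃ (n : ℕ) (p : Fin n → ℝ) (v : Fin n → I → ℂ),
    (∀ i, 0 ≤ p i) ∧ (∑ i, p i = 1) ∧ (∀ i, IsUnitVec (v i)) ∧
    x = vNEntropy (N.app (∑ i, (p i : ℂ) • outer (v i))) -
      ∑ i, p i * vNEntropy (N.app (outer (v i))) }

/-- The constrained Holevo capacity `χ_N(ρ)`: only ensembles averaging to `ρ` are allowed. -/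
def cHolevoCap {I O : Type} [Fintype I] [DecidableEq I] [Fintype O] [DecidableEq O]
    (N : QChannel I O) (ρ : Matrix I I ℂ) : ℝ :=
  sSup { x | ∃ (n : ℕ) (p : Fin n → ℝ) (v : Fin n → I → ℂ),
    (∀ i, 0 ≤ p i) ∧ (∑ i, p i = 1) ∧ (∀ i, IsUnitVec (v i)) ∧
    (∑ i, (p i : ℂ) • outer (v i)) = ρ ∧
    x = vNEntropy (N.app ρ) - ∑ i, p i * vNEntropy (N.app (outer (v i))) }

/-- Partial trace over the second (B) factor of a bipartite matrix. -/
def traceB {A B : Type} [Fintype B] (σ : Matrix (A × B) (A × B) ℂ) : Matrix A A ℂ :=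
  Matrix.of fun a a' => ∑ b, σ (a, b) (a', b)

/-- The entanglement of formation of a bipartite state on `A ⊗ B`. -/
def entF {A B : Type} [Fintype A] [DecidableEq A] [Fintype B] [DecidableEq B]
    (σ : Matrix (A × B) (A × B) ℂ) : ℝ :=
  sInf { x | ∃ (n : ℕ) (p : Fin n → ℝ) (v : Fin n → A × B → ℂ),
    (∀ i, 0 ≤ p i) ∧ (∀ i, IsUnitVec (v i)) ∧
    (∑ i, (p i : ℂ) • outer (v i)) = σ ∧
    x = ∑ i, p i * vNEntropy (traceB (outer (v i))) }

/-- The tensor product of two bipartite states `σ₁` on `A₁ ⊗ B₁` and `σ₂` on `A₂ ⊗ B₂`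
(Kronecker product), reindexed as a bipartite state with A-part `A₁ ⊗ A₂` and
B-part `B₁ ⊗ B₂`. -/
def pairTensor {A₁ B₁ A₂ B₂ : Type}
    (σ₁ : Matrix (A₁ × B₁) (A₁ × B₁) ℂ) (σ₂ : Matrix (A₂ × B₂) (A₂ × B₂) ℂ) :
    Matrix ((A₁ × A₂) × (B₁ × B₂)) ((A₁ × A₂) × (B₁ × B₂)) ℂ :=
  Matrix.of fun x y =>
    σ₁ (x.1.1, x.2.1) (y.1.1, y.2.1) * σ₂ (x.1.2, x.2.2) (y.1.2, y.2.2)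

/-- Trace out the second subsystem (`A₂` and `B₂`) of a quadripartite state. -/
def trace2 {A₁ A₂ B₁ B₂ : Type} [Fintype A₂] [Fintype B₂]
    (σ : Matrix ((A₁ × A₂) × (B₁ × B₂)) ((A₁ × A₂) × (B₁ × B₂)) ℂ) :
    Matrix (A₁ × B₁) (A₁ × B₁) ℂ :=
  Matrix.of fun x y => ∑ a₂, ∑ b₂, σ ((x.1, a₂), (x.2, b₂)) ((y.1, a₂), (y.2, b₂))

/-- Trace out the first subsystem (`A₁` and `B₁`) of a quadripartite state. -/
def trace1 {A₁ A₂ B₁ B₂ : Type} [Fintype A₁] [Fintype B₁]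
    (σ : Matrix ((A₁ × A₂) × (B₁ × B₂)) ((A₁ × A₂) × (B₁ × B₂)) ℂ) :
    Matrix (A₂ × B₂) (A₂ × B₂) ℂ :=
  Matrix.of fun x y => ∑ a₁, ∑ b₁, σ ((a₁, x.1), (b₁, x.2)) ((a₁, y.1), (b₁, y.2))



section MSWHelpers

set_option linter.unusedSectionVars false

section Unscoped
variable {n m : Type} [Fintype n] [Fintype m]

lemma star_dot_self (u : n → ℂ) : star u ⬝ᵥ u = ((∑ x, ‖u x‖ ^ 2 : ℝ) : ℂ) := by
  simp only [dotProduct, Pi.star_apply, Complex.ofReal_sum]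
  refine Finset.sum_congr rfl fun x _ => ?_
  rw [RCLike.star_def, mul_comm, Complex.mul_conj']
  push_cast; ring

lemma isUnitVec_iff (u : n → ℂ) : IsUnitVec u ↔ star u ⬝ᵥ u = 1 := by
  rw [star_dot_self, IsUnitVec]
  constructor
  · intro h; rw [h]; norm_num
  · intro h; exact_mod_cast h

lemma trace_outer (u : n → ℂ) : (outer u).trace = star u ⬝ᵥ u := by
  simp [Matrix.trace, outer, Matrix.diag, Matrix.vecMulVec_apply, dotProduct, mul_comm]

lemma outer_conj (M : Matrix n m ℂ) (v : m → ℂ) : M * outer v * Mᴴ = outer (M *ᵥ v) := by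
  ext x y
  simp only [outer, Matrix.mul_apply, Matrix.vecMulVec_apply, Matrix.conjTranspose_apply,
    Pi.star_apply, Matrix.mulVec, dotProduct, RCLike.star_def, map_sum, map_mul,
    Finset.sum_mul, Finset.mul_sum]
  exact Finset.sum_congr rfl fun j _ => Finset.sum_congr rfl fun k _ => by ring

lemma trace_traceB {A B : Type} [Fintype A] [Fintype B] (σ : Matrix (A × B) (A × B) ℂ) :
    (traceB σ).trace = σ.trace := by
  simp only [Matrix.trace, traceB, Matrix.diag_apply, Matrix.of_apply]
  exact (Fintype.sum_prod_type (fun x : A × B => σ x x)).symm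

lemma traceB_outer_posSemidef {A B : Type} [Fintype A] [Fintype B] (w : A × B → ℂ) :
    (traceB (outer w)).PosSemidef := by
  have : traceB (outer w) = (Matrix.of fun a b => w (a, b)) * (Matrix.of fun a b => w (a, b))ᴴ := by
    ext a a'
    simp [traceB, outer, Matrix.mul_apply, Matrix.vecMulVec_apply]
  rw [this]
  exact Matrix.posSemidef_self_mul_conjTranspose _

lemma traceB_outer_trace {A B : Type} [Fintype A] [Fintype B] {w : A × B → ℂ}
    (hw : IsUnitVec w) : (traceB (outer w)).trace = 1 := by
  rw [trace_traceB, trace_outer, (isUnitVec_iff w).mp hw]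

lemma conj_sum_smul {q r : Type} [Fintype q] [Fintype r] {k : ℕ} (W : Matrix q r ℂ)
    (c : Fin k → ℂ) (M : Fin k → Matrix r r ℂ) :
    W * (∑ i, c i • M i) * Wᴴ = ∑ i, c i • (W * M i * Wᴴ) := by
  rw [Matrix.mul_sum, Matrix.sum_mul]
  exact Finset.sum_congr rfl fun i _ => by rw [Matrix.mul_smul, Matrix.smul_mul]

end Unscoped

section Scoped
variable {n m : Type} [Fintype n] [Fintype m] [DecidableEq n] [DecidableEq m]

lemma diag_conj (V : Matrix n m ℂ) (c : m → ℂ) :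
    V * Matrix.diagonal c * Vᴴ = ∑ j, c j • outer (fun x => V x j) := by
  ext x y
  simp only [Matrix.mul_apply, Matrix.diagonal_apply, Matrix.conjTranspose_apply, Matrix.sum_apply,
    Matrix.smul_apply, outer, Matrix.vecMulVec_apply, Pi.star_apply, smul_eq_mul, mul_ite,
    ite_mul, mul_zero, zero_mul, Finset.sum_ite_eq, Finset.sum_ite_eq', Finset.mem_univ, if_true]
  exact Finset.sum_congr rfl fun k _ => by ring

lemma isometry_unit {V : Matrix n m ℂ} (hV : Vᴴ * V = 1) {v : m → ℂ} (hv : IsUnitVec v) :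
    IsUnitVec (V *ᵥ v) := by
  rw [isUnitVec_iff] at hv ⊢
  rw [Matrix.star_mulVec, ← Matrix.dotProduct_mulVec, Matrix.mulVec_mulVec, hV,
    Matrix.one_mulVec, hv]

lemma trace_eq_sum_eigs {M : Matrix n n ℂ} (h : M.IsHermitian) :
    M.trace = ∑ i, (h.eigenvalues i : ℂ) := by
  conv_lhs => rw [h.spectral_theorem, Unitary.conjStarAlgAut_apply]
  rw [Matrix.trace_mul_cycle, Matrix.mem_unitaryGroup_iff'.mp h.eigenvectorUnitary.2, one_mul,
    Matrix.trace_diagonal]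
  simp [RCLike.ofReal]

lemma vNEntropy_nonneg {M : Matrix n n ℂ} (h : M.PosSemidef) (ht : M.trace = 1) :
    0 ≤ vNEntropy M := by
  rw [vNEntropy, dif_pos h.1, neg_nonneg]
  have hsum : ∑ i, h.1.eigenvalues i = 1 := by
    have := trace_eq_sum_eigs h.1
    rw [ht] at this
    exact_mod_cast this.symm
  refine Finset.sum_nonpos fun i _ => ?_
  have h0 : 0 ≤ h.1.eigenvalues i := h.eigenvalues_nonneg i
  have h1 : h.1.eigenvalues i ≤ 1 := by
    rw [← hsum]
    exact Finset.single_le_sum (fun j _ => h.eigenvalues_nonneg j) (Finset.mem_univ i)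
  exact mul_nonpos_iff.2 (Or.inl ⟨h0, Real.log_nonpos h0 h1⟩)

lemma basis_unitVec (j : n) : IsUnitVec (fun x => (1 : Matrix n n ℂ) x j) := by
  rw [IsUnitVec]
  have h : ∀ x, ‖(1 : Matrix n n ℂ) x j‖ ^ 2 = if x = j then 1 else 0 := fun x => by
    rw [Matrix.one_apply]; split_ifs <;> simp
  calc ∑ x, ‖(1 : Matrix n n ℂ) x j‖ ^ 2 = ∑ x, if x = j then 1 else 0 :=
        Finset.sum_congr rfl fun x _ => h x
    _ = 1 := by simp

end Scoped

lemma csSup_const_sub (c : ℝ) (S : Set ℝ) (hne : S.Nonempty) (hbd : BddBelow S) :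
    sSup ((fun x => c - x) '' S) = c - sInf S := by
  apply IsLUB.csSup_eq _ (hne.image _)
  constructor
  · rintro y ⟨x, hx, rfl⟩
    have := csInf_le hbd hx
    simp only
    linarith
  · intro b hb
    have h1 : ∀ x ∈ S, c - b ≤ x := fun x hx => by
      have := hb (Set.mem_image_of_mem _ hx)
      linarith
    have := le_csInf hne h1
    linarith

lemma sum_support_eq {α : Type} [Fintype α] {lam : α → ℝ} [DecidablePred (fun i => lam i ≠ 0)]
    {M : Type} [AddCommMonoid M] (g : α → M) (hg : ∀ i, lam i = 0 → g i = 0) {r : ℕ}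
    (e : Fin r ≃ {i // lam i ≠ 0}) :
    ∑ j, g (e j : α) = ∑ i, g i := by
  rw [Equiv.sum_comp e (fun s : {i // lam i ≠ 0} => g s.val)]
  rw [← Finset.sum_subtype (Finset.univ.filter (fun i => lam i ≠ 0))
    (fun x => by simp) g]
  exact Finset.sum_filter_of_ne fun i _ hgi h0 => hgi (hg i h0)

section Channel
variable {I A B : Type} [Fintype I] [DecidableEq I] [Fintype A] [DecidableEq A]
  [Fintype B] [DecidableEq B]

def channelOf (V : Matrix (A × B) I ℂ) (hV : Vᴴ * V = 1) : QChannel I A where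
  ι := B
  A := fun b => Matrix.of fun a j => V (a, b) j
  complete := by
    ext j k
    have h2 : (Vᴴ * V) j k = (1 : Matrix I I ℂ) j k := by rw [hV]
    simp only [Matrix.mul_apply, Matrix.conjTranspose_apply] at h2
    simp only [Matrix.sum_apply, Matrix.mul_apply, Matrix.conjTranspose_apply, Matrix.of_apply]
    rw [← h2, Finset.sum_comm]
    exact (Fintype.sum_prod_type (fun x : A × B => star (V x j) * V x k)).symm

lemma channelOf_app (V : Matrix (A × B) I ℂ) (hV : Vᴴ * V = 1) (μ : Matrix I I ℂ) :
    (channelOf V hV).app μ = traceB (V * μ * Vᴴ) := by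
  ext a a'
  simp only [QChannel.app, channelOf, traceB, Matrix.sum_apply, Matrix.of_apply]
  refine Finset.sum_congr rfl fun b _ => ?_
  simp only [Matrix.mul_apply, Matrix.conjTranspose_apply, Matrix.of_apply]

lemma cap_eq [Nonempty I] (V : Matrix (A × B) I ℂ) (hV : Vᴴ * V = 1)
    (ρ : Matrix I I ℂ) (σ : Matrix (A × B) (A × B) ℂ)
    (hσρ : V * ρ * Vᴴ = σ) (hσtr : σ.trace = 1)
    (N : QChannel I A) (hN : ∀ μ, N.app μ = traceB (V * μ * Vᴴ))
    (hex : ∃ (k : ℕ) (p : Fin k → ℝ) (v : Fin k → I → ℂ),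
      (∀ i, 0 ≤ p i) ∧ (∑ i, p i = 1) ∧ (∀ i, IsUnitVec (v i)) ∧
      (∑ i, (p i : ℂ) • outer (v i)) = ρ) :
    cHolevoCap N ρ = vNEntropy (traceB σ) - entF σ := by
  classical
  have hNρ : N.app ρ = traceB σ := by rw [hN, hσρ]
  have hVVH : (V * Vᴴ)ᴴ = V * Vᴴ := by
    rw [Matrix.conjTranspose_mul, Matrix.conjTranspose_conjTranspose]
  have hρback : Vᴴ * σ * V = ρ := by
    rw [← hσρ]
    calc Vᴴ * (V * ρ * Vᴴ) * V = (Vᴴ * V) * ρ * (Vᴴ * V) := by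
          simp only [Matrix.mul_assoc]
      _ = ρ := by rw [hV, one_mul, mul_one]
  have hfix : ∀ (k : ℕ) (p : Fin k → ℝ) (w : Fin k → (A × B) → ℂ), (∀ i, 0 ≤ p i) →
      (∑ i, (p i : ℂ) • outer (w i)) = σ → ∀ i, p i ≠ 0 → (V * Vᴴ) *ᵥ w i = w i := by
    intro k p w hp hsum i hpi
    set Q : Matrix (A × B) (A × B) ℂ := 1 - V * Vᴴ with hQ
    have hQσ : Q * σ = 0 := by
      rw [← hσρ, hQ, Matrix.sub_mul, Matrix.one_mul]
      rw [show V * Vᴴ * (V * ρ * Vᴴ) = V * (Vᴴ * V) * (ρ * Vᴴ) from by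
        simp only [Matrix.mul_assoc], hV, Matrix.mul_one, ← Matrix.mul_assoc, sub_self]
    have hQH : Qᴴ = Q := by
      rw [hQ, Matrix.conjTranspose_sub, Matrix.conjTranspose_one, hVVH]
    have h0 : (0 : Matrix (A × B) (A × B) ℂ) = ∑ j, (p j : ℂ) • outer (Q *ᵥ w j) := by
      calc (0 : Matrix (A × B) (A × B) ℂ) = Q * σ * Qᴴ := by rw [hQσ, Matrix.zero_mul]
        _ = ∑ j, (p j : ℂ) • (Q * outer (w j) * Qᴴ) := by rw [← hsum, conj_sum_smul]
        _ = _ := by simp_rw [outer_conj]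
    have h1 := congrArg Matrix.trace h0
    rw [Matrix.trace_zero] at h1
    simp_rw [Matrix.trace_sum, Matrix.trace_smul, trace_outer, star_dot_self,
      smul_eq_mul] at h1
    have h2 : (0 : ℝ) = ∑ j, p j * (∑ x, ‖(Q *ᵥ w j) x‖ ^ 2) := by exact_mod_cast h1
    have h3 : ∀ j ∈ Finset.univ, (0:ℝ) ≤ p j * (∑ x, ‖(Q *ᵥ w j) x‖ ^ 2) := fun j _ =>
      mul_nonneg (hp j) (Finset.sum_nonneg fun x _ => sq_nonneg _)
    have h4 := (Finset.sum_eq_zero_iff_of_nonneg h3).mp h2.symm i (Finset.mem_univ i)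
    have h5 : (∑ x, ‖(Q *ᵥ w i) x‖ ^ 2) = 0 := by
      rcases mul_eq_zero.mp h4 with h | h
      · exact absurd h hpi
      · exact h
    have h6 : Q *ᵥ w i = 0 := by
      funext x
      have := (Finset.sum_eq_zero_iff_of_nonneg
        (fun x _ => sq_nonneg ‖(Q *ᵥ w i) x‖)).mp h5 x (Finset.mem_univ x)
      simpa using this
    have h7 : (1 - V * Vᴴ) *ᵥ w i = 0 := hQ ▸ h6
    rw [Matrix.sub_mulVec, Matrix.one_mulVec, sub_eq_zero] at h7
    exact h7.symm
  obtain ⟨k₀, p₀, v₀, hp₀, hp₀1, hu₀, hsum₀⟩ := hex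
  set SEF := {x | ∃ (n : ℕ) (p : Fin n → ℝ) (w : Fin n → A × B → ℂ),
      (∀ i, 0 ≤ p i) ∧ (∀ i, IsUnitVec (w i)) ∧
      (∑ i, (p i : ℂ) • outer (w i)) = σ ∧
      x = ∑ i, p i * vNEntropy (traceB (outer (w i)))} with hSEF
  have hbd : BddBelow SEF := by
    refine ⟨0, ?_⟩
    rintro x ⟨n, p, w, hp, hu, hs, rfl⟩
    exact Finset.sum_nonneg fun i _ => mul_nonneg (hp i)
      (vNEntropy_nonneg (traceB_outer_posSemidef _) (traceB_outer_trace (hu i)))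
  have hmapsum : ∀ (n : ℕ) (p : Fin n → ℝ) (v : Fin n → I → ℂ),
      (∑ i, (p i : ℂ) • outer (v i)) = ρ →
      (∑ i, (p i : ℂ) • outer (V *ᵥ v i)) = σ := by
    intro n p v hs
    simp_rw [← outer_conj]
    rw [← conj_sum_smul, hs, hσρ]
  have hne : SEF.Nonempty :=
    ⟨∑ i, p₀ i * vNEntropy (traceB (outer (V *ᵥ v₀ i))), k₀, p₀, fun i => V *ᵥ v₀ i, hp₀,
      fun i => isometry_unit hV (hu₀ i), hmapsum _ _ _ hsum₀, rfl⟩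
  have hset : {x | ∃ (n : ℕ) (p : Fin n → ℝ) (v : Fin n → I → ℂ),
      (∀ i, 0 ≤ p i) ∧ (∑ i, p i = 1) ∧ (∀ i, IsUnitVec (v i)) ∧
      (∑ i, (p i : ℂ) • outer (v i)) = ρ ∧
      x = vNEntropy (N.app ρ) - ∑ i, p i * vNEntropy (N.app (outer (v i)))}
      = (fun x => vNEntropy (traceB σ) - x) '' SEF := by
    ext x
    constructor
    · rintro ⟨n, p, v, hp, hp1, hu, hs, rfl⟩
      refine ⟨∑ i, p i * vNEntropy (N.app (outer (v i))), ⟨n, p, fun i => V *ᵥ v i, hp,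
        fun i => isometry_unit hV (hu i), hmapsum _ _ _ hs, ?_⟩, by rw [hNρ]⟩
      refine Finset.sum_congr rfl fun i _ => ?_
      rw [hN, outer_conj]
    · rintro ⟨y, ⟨n, p, w, hp, hu, hs, rfl⟩, rfl⟩
      have hp1 : ∑ i, p i = 1 := by
        have h1 := congrArg Matrix.trace hs
        rw [hσtr] at h1
        simp_rw [Matrix.trace_sum, Matrix.trace_smul, trace_outer, smul_eq_mul] at h1
        have h2 : ∀ i ∈ Finset.univ, (p i : ℂ) * (star (w i) ⬝ᵥ w i) = (p i : ℂ) := fun i _ => by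
          rw [(isUnitVec_iff (w i)).mp (hu i), mul_one]
        rw [Finset.sum_congr rfl h2] at h1
        exact_mod_cast h1
      have i₀ : I := Classical.arbitrary I
      set e0 : I → ℂ := fun x => (1 : Matrix I I ℂ) x i₀ with he0
      have he0u : IsUnitVec e0 := basis_unitVec i₀
      set v : Fin n → I → ℂ := fun i => if p i = 0 then e0 else Vᴴ *ᵥ w i with hv
      have hfixi : ∀ i, p i ≠ 0 → (V * Vᴴ) *ᵥ w i = w i := hfix n p w hp hs
      have hvu : ∀ i, IsUnitVec (v i) := by
        intro i
        rw [hv]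
        dsimp only
        split_ifs with h
        · exact he0u
        · rw [isUnitVec_iff, Matrix.star_mulVec, Matrix.conjTranspose_conjTranspose,
            ← Matrix.dotProduct_mulVec, Matrix.mulVec_mulVec, hfixi i h]
          exact (isUnitVec_iff (w i)).mp (hu i)
      have hkey : Vᴴ * (∑ i, (p i : ℂ) • outer (w i)) * V = ∑ i, (p i : ℂ) • outer (v i) := by
        have h8 := conj_sum_smul Vᴴ (fun i => ((p i : ℂ))) (fun i => outer (w i))
        rw [Matrix.conjTranspose_conjTranspose] at h8
        rw [h8]
        refine Finset.sum_congr rfl fun i _ => ?_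
        by_cases h : p i = 0
        · rw [h]; simp
        · have h9 := outer_conj Vᴴ (w i)
          rw [Matrix.conjTranspose_conjTranspose] at h9
          rw [h9, hv]
          dsimp only
          rw [if_neg h]
      refine ⟨n, p, v, hp, hp1, hvu, ?_, ?_⟩
      · rw [← hρback, ← hs]
        exact hkey.symm
      · rw [hNρ]
        congr 1
        refine Finset.sum_congr rfl fun i _ => ?_
        by_cases h : p i = 0
        · rw [h, zero_mul, zero_mul]
        · rw [hv]
          dsimp only
          rw [if_neg h, hN, outer_conj, Matrix.mulVec_mulVec, hfixi i h]
  unfold cHolevoCap entF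
  rw [hset, csSup_const_sub _ _ hne hbd]

end Channel

end MSWHelpers

/-- Converse direction of the MSW correspondence: every bipartite density matrix `σ`
arises as `V ρ Vᴴ` for an isometry `V` from a space of dimension `rank σ` and a
positive definite density matrix `ρ`, and the associated channel
`N(μ) = Tr_B (V μ Vᴴ)` satisfies `N(ρ) = Tr_B σ` and `χ_N(ρ) = H(Tr_B σ) - E_F(σ)`. -/
theorem msw_converse {dA dB : ℕ}
    (σ : Matrix (Fin dA × Fin dB) (Fin dA × Fin dB) ℂ) (hσ : IsDensityMatrix σ) :
    ∃ (dIn : ℕ) (V : Matrix (Fin dA × Fin dB) (Fin dIn) ℂ)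
      (ρ : Matrix (Fin dIn) (Fin dIn) ℂ),
      dIn = σ.rank ∧ Vᴴ * V = 1 ∧ ρ.PosDef ∧ ρ.trace = 1 ∧ V * ρ * Vᴴ = σ ∧
      ∃ N : QChannel (Fin dIn) (Fin dA),
        (∀ μ : Matrix (Fin dIn) (Fin dIn) ℂ, N.app μ = traceB (V * μ * Vᴴ)) ∧
        N.app ρ = traceB σ ∧
        cHolevoCap N ρ = vNEntropy (traceB σ) - entF σ := by
  classical
  obtain ⟨hpsd, htr⟩ := hσ
  have hH : σ.IsHermitian := hpsd.1
  have hU1 : (hH.eigenvectorUnitary : Matrix (Fin dA × Fin dB) (Fin dA × Fin dB) ℂ)ᴴ *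
      (hH.eigenvectorUnitary : Matrix (Fin dA × Fin dB) (Fin dA × Fin dB) ℂ) = 1 := by
    rw [← Matrix.star_eq_conjTranspose]
    exact Matrix.mem_unitaryGroup_iff'.mp hH.eigenvectorUnitary.2
  set U : Matrix (Fin dA × Fin dB) (Fin dA × Fin dB) ℂ :=
    (hH.eigenvectorUnitary : Matrix (Fin dA × Fin dB) (Fin dA × Fin dB) ℂ) with hU
  set lam : Fin dA × Fin dB → ℝ := hH.eigenvalues with hlamdef
  have hlam0 : ∀ i, 0 ≤ lam i := fun i => hpsd.eigenvalues_nonneg i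
  have hcard : Fintype.card {i // lam i ≠ 0} = σ.rank := hH.rank_eq_card_non_zero_eigs.symm
  have e' : Fin σ.rank ≃ {i // lam i ≠ 0} := (Fintype.equivFinOfCardEq hcard).symm
  set f : Fin σ.rank → Fin dA × Fin dB := fun j => (e' j : Fin dA × Fin dB) with hf
  have hfinj : Function.Injective f := fun a b hab => e'.injective (Subtype.ext hab)
  set V : Matrix (Fin dA × Fin dB) (Fin σ.rank) ℂ :=
    Matrix.of (fun x j => U x (f j)) with hVdef
  set ρ : Matrix (Fin σ.rank) (Fin σ.rank) ℂ :=
    Matrix.diagonal (fun j => (lam (f j) : ℂ)) with hρdef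
  have hVV : Vᴴ * V = 1 := by
    ext j k
    have h2 : (Uᴴ * U) (f j) (f k) = (1 : Matrix (Fin dA × Fin dB) (Fin dA × Fin dB) ℂ)
        (f j) (f k) := by rw [hU1]
    simp only [Matrix.mul_apply, Matrix.conjTranspose_apply, Matrix.one_apply] at h2
    simp only [Matrix.mul_apply, Matrix.conjTranspose_apply, Matrix.one_apply, hVdef,
      Matrix.of_apply]
    rw [h2]
    exact if_congr ⟨fun h => hfinj h, fun h => by rw [h]⟩ rfl rfl
  have hspec : σ = ∑ i, (lam i : ℂ) • outer (fun x => U x i) := by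
    conv_lhs => rw [hH.spectral_theorem, Unitary.conjStarAlgAut_apply]
    rw [Matrix.star_eq_conjTranspose]
    rw [show Matrix.diagonal ((RCLike.ofReal : ℝ → ℂ) ∘ hH.eigenvalues)
      = Matrix.diagonal (fun i => (lam i : ℂ)) from rfl]
    exact diag_conj U (fun i => (lam i : ℂ))
  have hσρ : V * ρ * Vᴴ = σ := by
    rw [hρdef, diag_conj]
    exact (sum_support_eq (fun i => (lam i : ℂ) • outer (fun x => U x i))
      (fun i h0 => by simp [h0]) e').trans hspec.symm
  have hρPD : ρ.PosDef := by
    rw [hρdef]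
    refine Matrix.posDef_diagonal_iff.mpr fun j => ?_
    have h1 : lam (f j) ≠ 0 := (e' j).2
    have h2 : 0 < lam (f j) := lt_of_le_of_ne (hlam0 (f j)) (Ne.symm h1)
    exact_mod_cast h2
  have hρtr : ρ.trace = 1 := by
    have h := congrArg Matrix.trace hσρ
    rw [Matrix.trace_mul_cycle, hVV, Matrix.one_mul, htr] at h
    exact h
  have hrank : 0 < σ.rank := by
    rcases Nat.eq_zero_or_pos σ.rank with h | h
    · exfalso
      rw [← hcard, Fintype.card_eq_zero_iff] at h
      have hall : ∀ i, lam i = 0 := fun i => not_not.mp fun hne0 => h.elim ⟨i, hne0⟩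
      have h3 := trace_eq_sum_eigs hH
      rw [htr] at h3
      simp only [← hlamdef, hall, Complex.ofReal_zero, Finset.sum_const_zero] at h3
      exact one_ne_zero h3
    · exact h
  haveI : Nonempty (Fin σ.rank) := Fin.pos_iff_nonempty.mp hrank
  have hsumlam : ∑ j, lam (f j) = 1 := by
    have h3 := trace_eq_sum_eigs hH
    rw [htr] at h3
    have h4 : ∑ i, lam i = 1 := by exact_mod_cast h3.symm
    rw [← h4]
    exact sum_support_eq lam (fun i h0 => h0) e'
  have hexρ : ∃ (k : ℕ) (p : Fin k → ℝ) (v : Fin k → Fin σ.rank → ℂ),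
      (∀ i, 0 ≤ p i) ∧ (∑ i, p i = 1) ∧ (∀ i, IsUnitVec (v i)) ∧
      (∑ i, (p i : ℂ) • outer (v i)) = ρ := by
    refine ⟨σ.rank, fun j => lam (f j),
      fun j => fun x => (1 : Matrix (Fin σ.rank) (Fin σ.rank) ℂ) x j,
      fun j => hlam0 (f j), hsumlam, fun j => basis_unitVec j, ?_⟩
    have := diag_conj (1 : Matrix (Fin σ.rank) (Fin σ.rank) ℂ) (fun j => (lam (f j) : ℂ))
    rw [one_mul, Matrix.conjTranspose_one, mul_one] at this
    rw [← this, hρdef]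
  exact ⟨σ.rank, V, ρ, rfl, hVV, hρPD, hρtr, hσρ, channelOf V hVV, channelOf_app V hVV,
    by rw [channelOf_app, hσρ], cap_eq V hVV ρ σ hσρ htr _ (channelOf_app V hVV) hexρ⟩


end
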